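/- If f : M → F is a map from a finitely generated module M over a commutative ring R to a free R-module F such that the dual map F* → M* is surjective, then f is versal, i.e., every R-module map from M to a free R-module factors through f. -/

import Mathlib

/-- If `M` is finitely generated and the dual map of `f : M → F` (with `F` free) is
surjective, then `f` is versal: every map from `M` to a free module factors through `f`. -/
theorem versal_of_dualMap_surjective {R : Type*} [CommRing R]
    {M : Type*} [AddCommGroup M] [Module R M] [Module.Finite R M]
    {F : Type*} [AddCommGroup F] [Module R F] [Module.Free R F]
    (f : M →ₗ[R] F) (hdual : Function.Surjective f.dualMap) :
    ∀ (G : Type*) [AddCommGroup G] [Module R G] [Module.Free R G] (g : M →ₗ[R] G),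
      ∃ h : F →ₗ[R] G, h ∘ₗ f = g := by
  intro G _ _ _ g
  set b := Module.Free.chooseBasis R G with hb
  obtain ⟨t, ht⟩ := Module.Finite.fg_top (R := R) (M := M)
  set s : Finset (Module.Free.ChooseBasisIndex R G) :=
    t.sup (fun m => (b.repr (g m)).support) with hs
  -- every coordinate outside s vanishes on all of M
  have hsupp : ∀ m : M, ∀ i ∉ s, b.repr (g m) i = 0 := by
    intro m
    have hm : m ∈ Submodule.span R (t : Set M) := by rw [ht]; trivial
    induction hm using Submodule.span_induction with
    | mem x hx =>
      intro i hi
      by_contra h0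
      exact hi (Finset.le_sup (f := fun m => (b.repr (g m)).support) hx
        (Finsupp.mem_support_iff.mpr h0))
    | zero => intro i _; simp
    | add x y _ _ hx hy => intro i hi; simp [hx i hi, hy i hi]
    | smul r x _ hx => intro i hi; simp [hx i hi]
  -- choose lifts of the coordinate functionals
  choose φ hφ using fun i => hdual (b.coord i ∘ₗ g)
  refine ⟨∑ i ∈ s, (φ i).smulRight (b i), ?_⟩
  ext m
  have hcoord : ∀ i, φ i (f m) = b.repr (g m) i := by
    intro i
    have := congrArg (fun ψ => ψ m) (hφ i)
    simpa [LinearMap.dualMap_apply, Module.Basis.coord_apply] using this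
  have : (∑ i ∈ s, (φ i).smulRight (b i)) (f m) =
      ∑ i ∈ s, b.repr (g m) i • b i := by
    simp [LinearMap.sum_apply, hcoord]
  rw [LinearMap.comp_apply, this]
  have := Finsupp.sum_of_support_subset (b.repr (g m))
    (fun i hi => by by_contra h; exact (Finsupp.mem_support_iff.mp hi) (hsupp m i h))
    (fun i r => r • b i) (fun i _ => zero_smul R (b i))
  rw [← this, ← Finsupp.linearCombination_apply]
  simp
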